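/- Let q be a prime and for n ≥ 1 and k ≥ 1 let χ(n,k,q) denote the number of tuples (x_1,…,x_n, y_1,…,y_n) ∈ F_q^{2n} such that x_i − y_i ≠ x_j for all 1 ≤ i < j ≤ n and the set {x_1 − y_1, …, x_n − y_n} has exactly k elements. Then χ(1,k,q) = q² if k = 1 and χ(1,k,q) = 0 otherwise, and for all n ≥ 2 the recurrence χ(n,k,q) = (q − k)·k·χ(n−1,k,q) + (q − k + 1)²·χ(n−1,k−1,q) holds (with the convention χ(n−1,0,q) = 0). -/

import Mathlib

/-- `chiHL q n k` is the number of tuples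
`(x 1, …, x n, y 1, …, y n) ∈ F_q^{2n}` such that `x i - y i ≠ x j` for all
`i < j` (i.e. the point avoids all hyperplanes of the homogenized Linial
arrangement) and the set `{x 1 - y 1, …, x n - y n}` has exactly `k`
elements. -/
noncomputable def chiHL (q n k : ℕ) : ℕ :=
  Nat.card {xy : (Fin n → ZMod q) × (Fin n → ZMod q) //
    (∀ i j : Fin n, i < j → xy.1 i - xy.2 i ≠ xy.1 j) ∧
    (Finset.univ.image (fun i => xy.1 i - xy.2 i)).card = k}

open Finset

variable {q : ℕ}

lemma image_split [NeZero q] (m : ℕ) (x y : Fin (m+1) → ZMod q) :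
    (Finset.univ.image (fun i => x i - y i)) =
      insert (x (Fin.last m) - y (Fin.last m))
        (Finset.univ.image (fun i : Fin m => x i.castSucc - y i.castSucc)) := by
  rw [Fin.univ_castSuccEmb, Finset.cons_eq_insert, Finset.image_insert,
    Finset.map_eq_image, Finset.image_image]
  rfl

lemma cond_split [NeZero q] (m : ℕ) (x y : Fin (m+1) → ZMod q) :
    (∀ i j : Fin (m+1), i < j → x i - y i ≠ x j) ↔
      ((∀ i j : Fin m, i < j → x i.castSucc - y i.castSucc ≠ x j.castSucc) ∧
       (∀ i : Fin m, x i.castSucc - y i.castSucc ≠ x (Fin.last m))) := by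
  constructor
  · intro h
    exact ⟨fun i j hij => h _ _ (Fin.castSucc_lt_castSucc_iff.2 hij),
           fun i => h _ _ (Fin.castSucc_lt_last i)⟩
  · rintro ⟨h1, h2⟩ i j hij
    rcases Fin.eq_castSucc_or_eq_last j with ⟨j', rfl⟩ | rfl
    · obtain ⟨i', rfl⟩ := Fin.exists_castSucc_eq.2 (Fin.ne_last_of_lt hij)
      exact h1 _ _ (Fin.castSucc_lt_castSucc_iff.1 hij)
    · obtain ⟨i', rfl⟩ := Fin.exists_castSucc_eq.2 (Fin.ne_last_of_lt hij)
      exact h2 i'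

lemma chiHL_eq [NeZero q] (n k : ℕ) :
    chiHL q n k = (Finset.univ.filter (fun xy : (Fin n → ZMod q) × (Fin n → ZMod q) =>
      (∀ i j : Fin n, i < j → xy.1 i - xy.2 i ≠ xy.1 j) ∧
      (Finset.univ.image (fun i => xy.1 i - xy.2 i)).card = k)).card := by
  classical
  rw [chiHL, Nat.card_eq_fintype_card, Fintype.card_subtype]

lemma chiHL_vanish [NeZero q] (n k : ℕ) (hkq : q < k) : chiHL q n k = 0 := by
  rw [chiHL]
  rw [Nat.card_eq_zero]
  left
  constructor
  rintro ⟨xy, -, h2⟩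
  have : (Finset.univ.image (fun i => xy.1 i - xy.2 i)).card ≤ q := by
    calc _ ≤ (Finset.univ : Finset (ZMod q)).card := Finset.card_le_card (Finset.subset_univ _)
    _ = q := by simp [ZMod.card]
  omega

-- fiber bijection
lemma fiber_card [NeZero q] (m k : ℕ) (b : (Fin m → ZMod q) × (Fin m → ZMod q))
    (hb : ∀ i j : Fin m, i < j → b.1 i - b.2 i ≠ b.1 j) :
    (((Finset.univ.filter (fun xy : (Fin (m+1) → ZMod q) × (Fin (m+1) → ZMod q) =>
        (∀ i j : Fin (m+1), i < j → xy.1 i - xy.2 i ≠ xy.1 j) ∧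
        (Finset.univ.image (fun i => xy.1 i - xy.2 i)).card = k))).filter
      (fun xy => ((fun i => xy.1 i.castSucc, fun i => xy.2 i.castSucc) = b))).card
    = (Finset.univ.filter (fun p : ZMod q × ZMod q =>
        p.1 ∉ Finset.univ.image (fun i => b.1 i - b.2 i) ∧
        (insert (p.1 - p.2) (Finset.univ.image (fun i => b.1 i - b.2 i))).card = k)).card := by
  classical
  set D := Finset.univ.image (fun i => b.1 i - b.2 i) with hD
  apply Finset.card_nbij' (fun xy => (xy.1 (Fin.last m), xy.2 (Fin.last m)))
    (fun p => (Fin.snoc b.1 p.1, Fin.snoc b.2 p.2))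
  · intro xy hxy
    change _ ∈ (_ : Finset _) at hxy
    change _ ∈ (_ : Finset _)
    simp only [Finset.mem_filter, Finset.mem_univ, true_and] at hxy ⊢
    obtain ⟨⟨h1, h2⟩, h3⟩ := hxy
    have hb1 : b.1 = fun i => xy.1 i.castSucc := by rw [← h3]
    have hb2 : b.2 = fun i => xy.2 i.castSucc := by rw [← h3]
    rw [cond_split] at h1
    rw [image_split] at h2
    constructor
    · rw [hD, hb1, hb2]
      simp only [Finset.mem_image, Finset.mem_univ, true_and, not_exists]
      exact fun i => h1.2 i
    · rw [hD, hb1, hb2]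
      exact h2
  · intro p hp
    change _ ∈ (_ : Finset _) at hp
    change _ ∈ (_ : Finset _)
    simp only [Finset.mem_filter, Finset.mem_univ, true_and] at hp ⊢
    obtain ⟨hp1, hp2⟩ := hp
    refine ⟨⟨?_, ?_⟩, ?_⟩
    · rw [cond_split]
      constructor
      · intro i j hij
        simpa [Fin.snoc_castSucc] using hb i j hij
      · intro i
        simp only [Fin.snoc_castSucc, Fin.snoc_last]
        intro hcon
        exact hp1 (by rw [hD]; exact Finset.mem_image.2 ⟨i, Finset.mem_univ i, hcon⟩)
    · rw [image_split]
      simp only [Fin.snoc_castSucc, Fin.snoc_last]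
      exact hp2
    · rw [Prod.ext_iff]
      constructor <;> funext i <;> simp [Fin.snoc_castSucc]
  · intro xy hxy
    change _ ∈ (_ : Finset _) at hxy
    simp only [Finset.mem_filter] at hxy
    have h3 := hxy.2
    have hb1 : b.1 = fun i => xy.1 i.castSucc := by rw [← h3]
    have hb2 : b.2 = fun i => xy.2 i.castSucc := by rw [← h3]
    ext i
    · rw [hb1]; exact congrFun (Fin.snoc_init_self xy.1) i
    · rw [hb2]; exact congrFun (Fin.snoc_init_self xy.2) i
  · intro p hp
    simp [Fin.snoc_last]

lemma pairs_card_mem [NeZero q] (D : Finset (ZMod q)) :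
    (Finset.univ.filter (fun p : ZMod q × ZMod q => p.1 ∉ D ∧ p.1 - p.2 ∈ D)).card
      = (q - D.card) * D.card := by
  classical
  have : (Finset.univ.filter (fun p : ZMod q × ZMod q => p.1 ∉ D ∧ p.1 - p.2 ∈ D)).card
      = (Dᶜ ×ˢ D).card := by
    apply Finset.card_nbij (fun p => (p.1, p.1 - p.2))
    · intro p hp
      change _ ∈ (_ : Finset _) at hp
      simp only [Finset.mem_filter, Finset.mem_univ, true_and] at hp
      simp [Finset.mem_product, hp.1, hp.2]
    · intro p _ r _ h
      simp only [Prod.mk.injEq] at h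
      obtain ⟨h1, h2⟩ := h
      rw [h1] at h2
      exact Prod.ext h1 (by linear_combination -h2)
    · rintro ⟨s, d⟩ hsd
      simp only [Finset.coe_product, Set.mem_prod, Finset.mem_coe, Finset.mem_compl] at hsd
      refine ⟨(s, s - d), ?_, by simp⟩
      simp [hsd.1, hsd.2]
  rw [this, Finset.card_product, Finset.card_compl, ZMod.card]

lemma pairs_card_not_mem [NeZero q] (D : Finset (ZMod q)) :
    (Finset.univ.filter (fun p : ZMod q × ZMod q => p.1 ∉ D ∧ p.1 - p.2 ∉ D)).card
      = (q - D.card) * (q - D.card) := by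
  classical
  have : (Finset.univ.filter (fun p : ZMod q × ZMod q => p.1 ∉ D ∧ p.1 - p.2 ∉ D)).card
      = (Dᶜ ×ˢ Dᶜ).card := by
    apply Finset.card_nbij (fun p => (p.1, p.1 - p.2))
    · intro p hp
      change _ ∈ (_ : Finset _) at hp
      simp only [Finset.mem_filter, Finset.mem_univ, true_and] at hp
      simp [Finset.mem_product, hp.1, hp.2]
    · intro p _ r _ h
      simp only [Prod.mk.injEq] at h
      obtain ⟨h1, h2⟩ := h
      rw [h1] at h2
      exact Prod.ext h1 (by linear_combination -h2)
    · rintro ⟨s, d⟩ hsd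
      simp only [Finset.coe_product, Set.mem_prod, Finset.mem_coe, Finset.mem_compl] at hsd
      refine ⟨(s, s - d), ?_, by simp⟩
      simp [hsd.1, hsd.2]
  rw [this, Finset.card_product, Finset.card_compl, ZMod.card]

lemma insert_card_iff_mem {α : Type*} [DecidableEq α] (D : Finset α) (u : α) (k : ℕ)
    (hD : D.card = k) : (insert u D).card = k ↔ u ∈ D := by
  by_cases h : u ∈ D
  · simp [Finset.insert_eq_self.2 h, hD, h]
  · rw [Finset.card_insert_of_notMem h, hD]
    simp [h]
lemma insert_card_iff_not_mem {α : Type*} [DecidableEq α] (D : Finset α) (u : α) (k : ℕ)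
    (hk : 1 ≤ k) (hD : D.card = k - 1) : (insert u D).card = k ↔ u ∉ D := by
  by_cases h : u ∈ D
  · rw [Finset.insert_eq_self.2 h, hD]
    simp only [h, not_true, iff_false]
    omega
  · rw [Finset.card_insert_of_notMem h, hD]
    simp [h]
    omega

lemma chiHL_rec [NeZero q] (m k : ℕ) (hk : 1 ≤ k) :
    chiHL q (m+1) k = (q - k) * k * chiHL q m k
      + (q - (k-1)) * (q - (k-1)) * chiHL q m (k-1) := by
  classical
  rw [chiHL_eq, chiHL_eq, chiHL_eq]
  set A : Finset ((Fin (m+1) → ZMod q) × (Fin (m+1) → ZMod q)) :=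
    Finset.univ.filter (fun xy =>
      (∀ i j : Fin (m+1), i < j → xy.1 i - xy.2 i ≠ xy.1 j) ∧
      (Finset.univ.image (fun i => xy.1 i - xy.2 i)).card = k) with hA
  set Bk : Finset ((Fin m → ZMod q) × (Fin m → ZMod q)) :=
    Finset.univ.filter (fun xy =>
      (∀ i j : Fin m, i < j → xy.1 i - xy.2 i ≠ xy.1 j) ∧
      (Finset.univ.image (fun i => xy.1 i - xy.2 i)).card = k) with hBk
  set Bk1 : Finset ((Fin m → ZMod q) × (Fin m → ZMod q)) :=
    Finset.univ.filter (fun xy =>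
      (∀ i j : Fin m, i < j → xy.1 i - xy.2 i ≠ xy.1 j) ∧
      (Finset.univ.image (fun i => xy.1 i - xy.2 i)).card = k - 1) with hBk1
  have hdisj : Disjoint Bk Bk1 := by
    rw [Finset.disjoint_left]
    intro b hb hb'
    rw [hBk, Finset.mem_filter] at hb
    rw [hBk1, Finset.mem_filter] at hb'
    omega
  have hmem : ∀ xy ∈ A,
      ((fun i => xy.1 i.castSucc, fun i => xy.2 i.castSucc) :
        (Fin m → ZMod q) × (Fin m → ZMod q)) ∈ Bk ∪ Bk1 := by
    intro xy hxy
    rw [hA, Finset.mem_filter] at hxy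
    obtain ⟨-, h1, h2⟩ := hxy
    rw [cond_split] at h1
    rw [image_split] at h2
    rw [Finset.mem_union, hBk, hBk1, Finset.mem_filter, Finset.mem_filter]
    by_cases h : xy.1 (Fin.last m) - xy.2 (Fin.last m)
        ∈ Finset.univ.image (fun i : Fin m => xy.1 i.castSucc - xy.2 i.castSucc)
    · left
      refine ⟨Finset.mem_univ _, h1.1, ?_⟩
      rw [Finset.insert_eq_self.2 h] at h2
      exact h2
    · right
      refine ⟨Finset.mem_univ _, h1.1, ?_⟩
      rw [Finset.card_insert_of_notMem h] at h2
      show (Finset.univ.image (fun i : Fin m => xy.1 i.castSucc - xy.2 i.castSucc)).card = k - 1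
      omega
  rw [Finset.card_eq_sum_card_fiberwise hmem, Finset.sum_union hdisj]
  have h1 : ∀ b ∈ Bk,
      (A.filter (fun xy => ((fun i => xy.1 i.castSucc, fun i => xy.2 i.castSucc) :
        (Fin m → ZMod q) × (Fin m → ZMod q)) = b)).card = (q - k) * k := by
    intro b hb
    rw [hBk, Finset.mem_filter] at hb
    obtain ⟨-, hb1, hb2⟩ := hb
    rw [hA, fiber_card m k b hb1]
    rw [show (Finset.univ.filter (fun p : ZMod q × ZMod q =>
        p.1 ∉ Finset.univ.image (fun i => b.1 i - b.2 i) ∧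
        (insert (p.1 - p.2) (Finset.univ.image (fun i => b.1 i - b.2 i))).card = k))
      = (Finset.univ.filter (fun p : ZMod q × ZMod q =>
        p.1 ∉ Finset.univ.image (fun i => b.1 i - b.2 i) ∧
        p.1 - p.2 ∈ Finset.univ.image (fun i => b.1 i - b.2 i))) from
      Finset.filter_congr (fun p _ => by
        rw [insert_card_iff_mem _ _ _ hb2])]
    rw [pairs_card_mem, hb2]
  have h2 : ∀ b ∈ Bk1,
      (A.filter (fun xy => ((fun i => xy.1 i.castSucc, fun i => xy.2 i.castSucc) :
        (Fin m → ZMod q) × (Fin m → ZMod q)) = b)).card = (q - (k-1)) * (q - (k-1)) := by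
    intro b hb
    rw [hBk1, Finset.mem_filter] at hb
    obtain ⟨-, hb1, hb2⟩ := hb
    rw [hA, fiber_card m k b hb1]
    rw [show (Finset.univ.filter (fun p : ZMod q × ZMod q =>
        p.1 ∉ Finset.univ.image (fun i => b.1 i - b.2 i) ∧
        (insert (p.1 - p.2) (Finset.univ.image (fun i => b.1 i - b.2 i))).card = k))
      = (Finset.univ.filter (fun p : ZMod q × ZMod q =>
        p.1 ∉ Finset.univ.image (fun i => b.1 i - b.2 i) ∧
        p.1 - p.2 ∉ Finset.univ.image (fun i => b.1 i - b.2 i))) from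
      Finset.filter_congr (fun p _ => by
        rw [insert_card_iff_not_mem _ _ _ hk hb2])]
    rw [pairs_card_not_mem, hb2]
  rw [Finset.sum_congr rfl h1, Finset.sum_congr rfl h2, Finset.sum_const, Finset.sum_const,
    smul_eq_mul, smul_eq_mul]
  ring


/-- For a prime `q`: `χ(1,k,q) = q²` if `k = 1` and `0`
otherwise, and for `n ≥ 2`, `k ≥ 1`,
`χ(n,k,q) = (q-k)·k·χ(n-1,k,q) + (q-k+1)²·χ(n-1,k-1,q)`
(the convention `χ(n-1,0,q) = 0` holds automatically). -/
theorem chiHL_init_and_recurrence (q : ℕ) (hq : q.Prime) :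
    (∀ k : ℕ, 1 ≤ k → chiHL q 1 k = if k = 1 then q ^ 2 else 0) ∧
    (∀ n k : ℕ, 2 ≤ n → 1 ≤ k →
      (chiHL q n k : ℤ) =
        ((q : ℤ) - k) * k * chiHL q (n - 1) k
          + ((q : ℤ) - k + 1) ^ 2 * chiHL q (n - 1) (k - 1)) := by
  haveI : Fact q.Prime := ⟨hq⟩
  have hq0 : q ≠ 0 := hq.ne_zero
  haveI : NeZero q := ⟨hq0⟩
  classical
  have him : ∀ x y : Fin 1 → ZMod q,
      (Finset.univ.image (fun i => x i - y i)).card = 1 := by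
    intro x y
    rw [Finset.univ_unique, Finset.image_singleton, Finset.card_singleton]
  constructor
  · intro k hk
    split_ifs with h
    · subst h
      rw [chiHL_eq]
      rw [Finset.filter_true_of_mem (fun xy _ =>
        ⟨fun i j hij => absurd hij (by simp [Subsingleton.elim i j]), him _ _⟩)]
      rw [Finset.card_univ]
      simp [ZMod.card, sq]
    · rw [chiHL_eq]
      rw [Finset.filter_false_of_mem (fun xy _ hc => h (by rw [← hc.2, him]))]
      exact Finset.card_empty
  · intro n k hn hk
    obtain ⟨m, rfl⟩ : ∃ m, n = m + 1 := ⟨n - 1, by omega⟩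
    simp only [Nat.add_sub_cancel]
    rw [chiHL_rec m k hk]
    by_cases hkq : k ≤ q
    · push_cast
      have e1 : ((q - k : ℕ) : ℤ) = (q : ℤ) - k := by omega
      have e2 : ((q - (k - 1) : ℕ) : ℤ) = (q : ℤ) - k + 1 := by omega
      rw [e1, e2]
      ring
    · have h2 : chiHL q m k = 0 := chiHL_vanish _ _ (by omega)
      rcases eq_or_lt_of_le (show q + 1 ≤ k by omega) with h | h
      · rw [h2]
        have e0 : ((q : ℤ) - k + 1) = 0 := by omega
        have e3 : (q - (k - 1)) = 0 := by omega
        rw [e0, e3]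
        push_cast
        ring
      · have h3 : chiHL q m (k - 1) = 0 := chiHL_vanish _ _ (by omega)
        rw [h2, h3]
        push_cast
        ring
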